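/- The following are equivalent: (1) for every four-party pure quantum state, r_{BC} ≤ r_{AB} · r_{AC}; (2) for all K and all m₁×n₁ matrices R₁,...,R_K and m₂×n₂ matrices S₁,...,S_K, rank(Σᵢ Rᵢ ⊗ Sᵢᵀ) ≤ K · rank(Σᵢ Rᵢ ⊗ Sᵢ). -/

import Mathlib

open Matrix Kronecker Module

-- rank is subadditive
lemma myRankAddLe {m n : Type*} [Fintype m] [Fintype n] (A B : Matrix m n ℂ) :
    (A + B).rank ≤ A.rank + B.rank := by
  have hr : LinearMap.range (A + B).mulVecLin ≤
      LinearMap.range A.mulVecLin ⊔ LinearMap.range B.mulVecLin := by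
    rintro x ⟨y, rfl⟩
    rw [Matrix.mulVecLin_add]
    exact Submodule.add_mem_sup ⟨y, rfl⟩ ⟨y, rfl⟩
  refine le_trans (Submodule.finrank_mono hr) ?_
  exact Submodule.finrank_add_le_finrank_add_finrank _ _

lemma myRankSumLe {m n ι : Type*} [Fintype m] [Fintype n] (s : Finset ι)
    (f : ι → Matrix m n ℂ) : (∑ i ∈ s, f i).rank ≤ ∑ i ∈ s, (f i).rank := by
  classical
  induction s using Finset.induction_on with
  | empty => simp
  | insert _ _ h ih =>
    rw [Finset.sum_insert h, Finset.sum_insert h]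
    exact (myRankAddLe _ _).trans (add_le_add_right ih _)

lemma myRankVecMulVec {m n : Type*} [Fintype m] [Fintype n] (w : m → ℂ) (v : n → ℂ) :
    (Matrix.vecMulVec w v).rank ≤ 1 := by
  rw [Matrix.vecMulVec_eq (Fin 1)]
  exact (Matrix.rank_mul_le_right _ _).trans
    ((Matrix.rank_le_card_height _).trans (by simp))

-- rank factorization
lemma myFactor {m n : Type*} [Fintype m] [Fintype n] (A : Matrix m n ℂ) :
    ∃ u : Fin A.rank → m → ℂ, ∃ v : Fin A.rank → n → ℂ,
      ∀ i j, A i j = ∑ k, u k i * v k j := by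
  classical
  set V : Submodule ℂ (m → ℂ) := Submodule.span ℂ (Set.range Aᵀ) with hV
  have hfin : finrank ℂ V = A.rank := (Matrix.rank_eq_finrank_span_cols A).symm
  let b : Basis (Fin A.rank) ℂ V := finBasisOfFinrankEq ℂ V hfin
  have hmem : ∀ j, Aᵀ j ∈ V := fun j => Submodule.subset_span ⟨j, rfl⟩
  refine ⟨fun k i => (b k : m → ℂ) i, fun k j => b.repr ⟨Aᵀ j, hmem j⟩ k, fun i j => ?_⟩
  have := b.sum_repr ⟨Aᵀ j, hmem j⟩
  have h2 := congrArg (fun x : V => (x : m → ℂ) i) this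
  simp only [Submodule.coe_sum, SetLike.val_smul, Finset.sum_apply, Pi.smul_apply,
    smul_eq_mul] at h2
  simpa [Matrix.transpose_apply, mul_comm] using h2.symm

/-- The hypothesis `r_BC ≤ r_AB · r_AC` for all four-party pure states is
equivalent to the matrix-rank hypothesis
`rank(Σᵢ Rᵢ ⊗ Sᵢᵀ) ≤ K · rank(Σᵢ Rᵢ ⊗ Sᵢ)`. -/
theorem rank_hypothesis_iff_matrix_hypothesis :
    (∀ (dA dB dC dD : ℕ) (ψ : Fin dA → Fin dB → Fin dC → Fin dD → ℂ), ψ ≠ 0 →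
      (Matrix.of fun (p : Fin dB × Fin dC) (x : Fin dA × Fin dD) =>
          ψ x.1 p.1 p.2 x.2).rank ≤
        (Matrix.of fun (p : Fin dA × Fin dB) (x : Fin dC × Fin dD) =>
            ψ p.1 p.2 x.1 x.2).rank *
        (Matrix.of fun (p : Fin dA × Fin dC) (x : Fin dB × Fin dD) =>
            ψ p.1 x.1 p.2 x.2).rank) ↔
    (∀ (K m₁ n₁ m₂ n₂ : ℕ) (R : Fin K → Matrix (Fin m₁) (Fin n₁) ℂ)
        (S : Fin K → Matrix (Fin m₂) (Fin n₂) ℂ),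
      (∑ i, R i ⊗ₖ (S i)ᵀ).rank ≤ K * (∑ i, R i ⊗ₖ S i).rank) := by
  constructor
  · intro h K m₁ n₁ m₂ n₂ R S
    set ψ : Fin n₁ → Fin m₁ → Fin n₂ → Fin m₂ → ℂ :=
      fun a b c d => ∑ k, R k b a * S k d c with hψdef
    have eBC : (Matrix.of fun (p : Fin m₁ × Fin n₂) (x : Fin n₁ × Fin m₂) =>
        ψ x.1 p.1 p.2 x.2) = ∑ i, R i ⊗ₖ (S i)ᵀ := by
      ext ⟨b, c⟩ ⟨a, d⟩
      simp [hψdef, Matrix.sum_apply, Matrix.kroneckerMap_apply]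
    by_cases hψ : ψ = 0
    · have hz : (∑ i, R i ⊗ₖ (S i)ᵀ) = 0 := by
        rw [← eBC]
        ext ⟨b, c⟩ ⟨a, d⟩
        simp [hψ]
      rw [hz, Matrix.rank_zero]
      exact Nat.zero_le _
    · have key := h n₁ m₁ n₂ m₂ ψ hψ
      have eAC : (Matrix.of fun (p : Fin n₁ × Fin n₂) (x : Fin m₁ × Fin m₂) =>
          ψ p.1 x.1 p.2 x.2) = (∑ i, R i ⊗ₖ S i)ᵀ := by
        ext ⟨a, c⟩ ⟨b, d⟩
        simp [hψdef, Matrix.sum_apply, Matrix.kroneckerMap_apply]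
      have eAB : (Matrix.of fun (p : Fin n₁ × Fin m₁) (x : Fin n₂ × Fin m₂) =>
          ψ p.1 p.2 x.1 x.2) = ∑ k, Matrix.vecMulVec
            (fun p : Fin n₁ × Fin m₁ => R k p.2 p.1)
            (fun x : Fin n₂ × Fin m₂ => S k x.2 x.1) := by
        ext ⟨a, b⟩ ⟨c, d⟩
        simp [hψdef, Matrix.sum_apply, Matrix.vecMulVec_apply]
      have hAB : (Matrix.of fun (p : Fin n₁ × Fin m₁) (x : Fin n₂ × Fin m₂) =>
          ψ p.1 p.2 x.1 x.2).rank ≤ K := by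
        rw [eAB]
        refine (myRankSumLe _ _).trans ?_
        calc ∑ k : Fin K, (Matrix.vecMulVec
              (fun p : Fin n₁ × Fin m₁ => R k p.2 p.1)
              (fun x : Fin n₂ × Fin m₂ => S k x.2 x.1)).rank
            ≤ ∑ _k : Fin K, 1 := Finset.sum_le_sum fun k _ => myRankVecMulVec _ _
          _ = K := by simp
      rw [eBC, eAC, Matrix.rank_transpose] at key
      exact key.trans (Nat.mul_le_mul_right _ hAB)
  · intro h dA dB dC dD ψ _hψ
    set A : Matrix (Fin dA × Fin dB) (Fin dC × Fin dD) ℂ :=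
      Matrix.of fun p x => ψ p.1 p.2 x.1 x.2 with hA
    obtain ⟨u, v, huv⟩ := myFactor A
    set R : Fin A.rank → Matrix (Fin dB) (Fin dA) ℂ :=
      fun k => Matrix.of fun b a => u k (a, b) with hR
    set S : Fin A.rank → Matrix (Fin dD) (Fin dC) ℂ :=
      fun k => Matrix.of fun d c => v k (c, d) with hS
    have key := h A.rank dB dA dD dC R S
    have eBC : (∑ i, R i ⊗ₖ (S i)ᵀ) = Matrix.of
        fun (p : Fin dB × Fin dC) (x : Fin dA × Fin dD) => ψ x.1 p.1 p.2 x.2 := by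
      ext ⟨b, c⟩ ⟨a, d⟩
      simp only [Matrix.sum_apply, Matrix.kroneckerMap_apply, Matrix.transpose_apply,
        Matrix.of_apply, hR, hS]
      exact (huv (a, b) (c, d)).symm
    have eAC : (∑ i, R i ⊗ₖ S i) = (Matrix.of
        fun (p : Fin dA × Fin dC) (x : Fin dB × Fin dD) => ψ p.1 x.1 p.2 x.2)ᵀ := by
      ext ⟨b, d⟩ ⟨a, c⟩
      simp only [Matrix.sum_apply, Matrix.kroneckerMap_apply, Matrix.transpose_apply,
        Matrix.of_apply, hR, hS]
      exact (huv (a, b) (c, d)).symm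
    rw [eBC, eAC, Matrix.rank_transpose] at key
    exact key
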